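/- For every t > 0, P_n = D_n(t) T_n(t) D_n(t)^{-1}, where D_n(t) = diag(0!, 1!/t, 2!/t^2, ..., (n-1)!/t^{n-1}) and T_n(t) is the lower triangular Toeplitz matrix with (T_n(t))_{ij} = t^{i-j}/(i-j)! for i ≥ j. -/

import Mathlib

/-- For every `t > 0`, `P_n = D_n(t) T_n(t) D_n(t)⁻¹`, where
`D_n(t) = diag(0!, 1!/t, ..., (n-1)!/t^{n-1})` and `T_n(t)` is the lower triangular
Toeplitz matrix with `(T_n(t))_{ij} = t^{i-j}/(i-j)!` for `i ≥ j`. -/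
theorem pascal_toeplitz_balancing (n : ℕ) (t : ℝ) (ht : 0 < t)
    (P : Matrix (Fin n) (Fin n) ℝ)
    (hP : ∀ i j : Fin n, P i j = if (j : ℕ) ≤ (i : ℕ) then ((i : ℕ).choose j : ℝ) else 0)
    (D : Matrix (Fin n) (Fin n) ℝ)
    (hD : D = Matrix.diagonal (fun i : Fin n => ((i : ℕ).factorial : ℝ) / t ^ (i : ℕ)))
    (T : Matrix (Fin n) (Fin n) ℝ)
    (hT : ∀ i j : Fin n, T i j =
      if (j : ℕ) ≤ (i : ℕ) then t ^ ((i : ℕ) - (j : ℕ)) / (((i : ℕ) - (j : ℕ)).factorial : ℝ)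
      else 0) :
    P = D * T * D⁻¹ := by
  have ht' : t ≠ 0 := ne_of_gt ht
  subst hD
  have hinv : (Matrix.diagonal fun i : Fin n => ((i : ℕ).factorial : ℝ) / t ^ (i : ℕ))⁻¹
      = Matrix.diagonal (fun i : Fin n => t ^ (i : ℕ) / ((i : ℕ).factorial : ℝ)) := by
    apply Matrix.inv_eq_right_inv
    rw [Matrix.diagonal_mul_diagonal]
    ext i j
    by_cases hij : i = j
    · subst hij
      have hfi : ((i : ℕ).factorial : ℝ) ≠ 0 := Nat.cast_ne_zero.mpr (Nat.factorial_ne_zero _)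
      have : t ^ (i : ℕ) ≠ 0 := pow_ne_zero _ ht'
      simp only [Matrix.diagonal_apply_eq]
      field_simp
      simp
    · simp [Matrix.diagonal, hij]
  rw [hinv]
  ext i j
  rw [Matrix.mul_diagonal, Matrix.diagonal_mul]
  simp only [hP, hT]
  by_cases h : (j : ℕ) ≤ (i : ℕ)
  · simp only [h, if_true]
    rw [Nat.cast_choose ℝ h]
    have hfi : ((i : ℕ).factorial : ℝ) ≠ 0 := Nat.cast_ne_zero.mpr (Nat.factorial_ne_zero _)
    have hfj : ((j : ℕ).factorial : ℝ) ≠ 0 := Nat.cast_ne_zero.mpr (Nat.factorial_ne_zero _)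
    have hfd : (((i : ℕ) - (j : ℕ)).factorial : ℝ) ≠ 0 :=
      Nat.cast_ne_zero.mpr (Nat.factorial_ne_zero _)
    have hpow : t ^ (i : ℕ) = t ^ ((i : ℕ) - (j : ℕ)) * t ^ (j : ℕ) := by
      rw [← pow_add, Nat.sub_add_cancel h]
    field_simp
    rw [hpow]
  · simp [h]
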